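/- Let F be an n × m Ferrers diagram with m ≥ n ≥ 2. Then the pair (F,2) satisfies κ(F,2) = Σ_{i=1}^{m+n-1} max{0, |D_i ∩ F| - 1} (i.e., (F,2) is MDS-constructible) if and only if |D_i ∩ F| = 0 for all i > m. -/

import Mathlib

/-- The `n × m` matrix board `[n] × [m]` (1-based). -/
def board (n m : ℕ) : Finset (ℕ × ℕ) := Finset.Icc 1 n ×ˢ Finset.Icc 1 m

/-- `F` is an `n × m` Ferrers diagram: contained in the board, contains `(1,1)` and `(n,m)`,
right-aligned and top-aligned. -/
def IsFerrers (n m : ℕ) (F : Finset (ℕ × ℕ)) : Prop :=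
  F ⊆ board n m ∧ (1, 1) ∈ F ∧ (n, m) ∈ F ∧
  (∀ i j, (i, j) ∈ F → j < m → (i, j + 1) ∈ F) ∧
  (∀ i j, (i, j) ∈ F → 1 < i → (i - 1, j) ∈ F)

/-- The `r`-th diagonal of the `n × m` board: `{(i,j) : j - i = m - r}`. -/
def diag (n m r : ℕ) : Finset (ℕ × ℕ) :=
  (board n m).filter (fun p => p.2 + r = p.1 + m)

/-- The height `c_t` of the `t`-th column of `F`. -/
def colH (F : Finset (ℕ × ℕ)) (t : ℕ) : ℕ := (F.filter (fun p => p.2 = t)).card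

/-- `κ_j(F,d) = Σ_{t=1}^{m-d+1+j} max{c_t - j, 0}` (truncated subtraction). -/
def kappaJ (F : Finset (ℕ × ℕ)) (m d j : ℕ) : ℕ :=
  ∑ t ∈ Finset.Icc 1 (m - d + 1 + j), (colH F t - j)

/-- `κ(F,d) = min_{0 ≤ j ≤ d-1} κ_j(F,d)`. -/
noncomputable def kappa (F : Finset (ℕ × ℕ)) (m d : ℕ) : ℕ :=
  sInf (kappaJ F m d '' Set.Iio d)

/-- `Σ_{i=1}^{m+n-1} max{0, |D_i ∩ F| - (d-1)}` (truncated subtraction). -/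
def diagSum (n m : ℕ) (F : Finset (ℕ × ℕ)) (d : ℕ) : ℕ :=
  ∑ i ∈ Finset.Icc 1 (m + n - 1), ((diag n m i ∩ F).card - (d - 1))

/-- The pair `(F,d)` is MDS-constructible. -/
def MDSConstructible (n m : ℕ) (F : Finset (ℕ × ℕ)) (d : ℕ) : Prop :=
  kappa F m d = diagSum n m F d

/-- Sum of truncated subtractions by one. -/
lemma sum_sub_one {s : Finset ℕ} {f : ℕ → ℕ} (h : ∀ i ∈ s, 1 ≤ f i) :
    ∑ i ∈ s, (f i - 1) = (∑ i ∈ s, f i) - s.card := by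
  have key : ∑ i ∈ s, (f i - 1) + s.card = ∑ i ∈ s, f i := by
    have hc : s.card = ∑ i ∈ s, 1 := by simp
    rw [hc, ← Finset.sum_add_distrib]
    exact Finset.sum_congr rfl fun i hi => by have := h i hi; omega
  omega

theorem mds_constructible_d2_char (n m : ℕ) (F : Finset (ℕ × ℕ)) (hF : IsFerrers n m F)
    (hmn : n ≤ m) (hn : 2 ≤ n) :
    MDSConstructible n m F 2 ↔ ∀ i, m < i → (diag n m i ∩ F).card = 0 := by
  obtain ⟨hsub, h11, hnm, hright, htop⟩ := hF
  have hm : 2 ≤ m := le_trans hn hmn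
  have hboard : ∀ p ∈ F, 1 ≤ p.1 ∧ p.1 ≤ n ∧ 1 ≤ p.2 ∧ p.2 ≤ m := by
    intro p hp
    have := hsub hp
    simp only [board, Finset.mem_product, Finset.mem_Icc] at this
    exact ⟨this.1.1, this.1.2, this.2.1, this.2.2⟩
  -- row 1 is entirely in F
  have hrow1 : ∀ j, 1 ≤ j → j ≤ m → (1, j) ∈ F := by
    intro j h1 h2
    induction j with
    | zero => omega
    | succ k ih =>
      rcases Nat.eq_zero_or_pos k with hk0 | hk0
      · subst hk0; exact h11
      · exact hright 1 k (ih hk0 (by omega)) (by omega)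
  -- every column is nonempty
  have hcol1 : ∀ t, 1 ≤ t → t ≤ m → 1 ≤ colH F t := by
    intro t h1 h2
    have : (1, t) ∈ F.filter (fun p => p.2 = t) := by
      simp [hrow1 t h1 h2]
    exact Finset.card_pos.2 ⟨_, this⟩
  -- last column has at most n cells
  have hcolm : colH F m ≤ n := by
    have hss : F.filter (fun p => p.2 = m) ⊆ (Finset.Icc 1 n).image (fun i => (i, m)) := by
      intro p hp
      simp only [Finset.mem_filter] at hp
      obtain ⟨hpF, hpm⟩ := hp
      have hb := hboard p hpF
      simp only [Finset.mem_image, Finset.mem_Icc]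
      refine ⟨p.1, ⟨hb.1, hb.2.1⟩, ?_⟩
      rw [← hpm]
    calc colH F m ≤ ((Finset.Icc 1 n).image (fun i => (i, m))).card :=
          Finset.card_le_card hss
      _ ≤ (Finset.Icc 1 n).card := Finset.card_image_le
      _ = n := by simp
  -- sum of column heights is |F|
  have hsumcol : ∑ t ∈ Finset.Icc 1 m, colH F t = F.card := by
    unfold colH
    rw [eq_comm]
    apply Finset.card_eq_sum_card_fiberwise (f := fun (p : ℕ × ℕ) => p.2)
    intro p hp
    have hb := hboard p hp
    simp only [Finset.coe_Icc, Set.mem_Icc, Finset.mem_coe, Finset.mem_Icc]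
    omega
  -- diag ∩ F as a filter of F
  have hdiagF : ∀ i, diag n m i ∩ F = F.filter (fun p => p.2 + i = p.1 + m) := by
    intro i
    ext p
    simp only [diag, Finset.mem_inter, Finset.mem_filter]
    constructor
    · rintro ⟨⟨_, h⟩, hpF⟩; exact ⟨hpF, h⟩
    · rintro ⟨hpF, h⟩; exact ⟨⟨hsub hpF, h⟩, hpF⟩
  -- sum over diagonals is |F|
  have hsumdiag : ∑ i ∈ Finset.Icc 1 (m + n - 1), (diag n m i ∩ F).card = F.card := by
    rw [eq_comm]
    rw [Finset.card_eq_sum_card_fiberwise (f := fun (p : ℕ × ℕ) => p.1 + m - p.2)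
      (t := Finset.Icc 1 (m + n - 1)) (fun p hp => by
        have hb := hboard p hp
        dsimp only
        simp only [Finset.coe_Icc, Set.mem_Icc, Finset.mem_coe, Finset.mem_Icc]
        omega)]
    apply Finset.sum_congr rfl
    intro i hi
    simp only [Finset.mem_Icc] at hi
    rw [hdiagF]
    congr 1
    ext p
    simp only [Finset.mem_filter]
    constructor
    · rintro ⟨hpF, h⟩
      have hb := hboard p hpF
      exact ⟨hpF, by omega⟩
    · rintro ⟨hpF, h⟩
      have hb := hboard p hpF
      exact ⟨hpF, by omega⟩
  -- far diagonals are empty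
  have hbig : ∀ i, m + n - 1 < i → (diag n m i ∩ F).card = 0 := by
    intro i hi
    rw [Finset.card_eq_zero, hdiagF]
    rw [Finset.filter_eq_empty_iff]
    intro p hp
    have hb := hboard p hp
    omega
  -- the set of indices of nonempty diagonals
  set S : Finset ℕ :=
    (Finset.Icc 1 (m + n - 1)).filter (fun i => (diag n m i ∩ F).card ≠ 0) with hS
  have hIccS : Finset.Icc 1 m ⊆ S := by
    intro i hi
    simp only [Finset.mem_Icc] at hi
    have hcell : (1, m + 1 - i) ∈ diag n m i ∩ F := by
      rw [hdiagF]
      simp only [Finset.mem_filter]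
      exact ⟨hrow1 (m + 1 - i) (by omega) (by omega), by omega⟩
    simp only [hS, Finset.mem_filter, Finset.mem_Icc]
    refine ⟨⟨hi.1, by omega⟩, ?_⟩
    have := Finset.card_pos.2 ⟨_, hcell⟩
    omega
  have hSone : ∀ i ∈ S, 1 ≤ (diag n m i ∩ F).card := by
    intro i hi
    simp only [hS, Finset.mem_filter] at hi
    omega
  have hsumS : ∑ i ∈ S, (diag n m i ∩ F).card = F.card := by
    rw [← hsumdiag]
    apply Finset.sum_subset (Finset.filter_subset _ _)
    intro i hi hni
    simp only [hS, Finset.mem_filter] at hni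
    by_contra h
    exact hni ⟨hi, h⟩
  have hScard_le : S.card ≤ F.card := by
    calc S.card = ∑ i ∈ S, 1 := by simp
      _ ≤ ∑ i ∈ S, (diag n m i ∩ F).card := Finset.sum_le_sum hSone
      _ = F.card := hsumS
  have hmS : m ≤ S.card := by
    calc m = (Finset.Icc 1 m).card := by simp
      _ ≤ S.card := Finset.card_le_card hIccS
  -- diagSum = |F| - |S|
  have hdsum : diagSum n m F 2 = F.card - S.card := by
    unfold diagSum
    have h1 : ∑ i ∈ Finset.Icc 1 (m + n - 1), ((diag n m i ∩ F).card - (2 - 1))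
        = ∑ i ∈ S, ((diag n m i ∩ F).card - 1) := by
      rw [eq_comm]
      apply Finset.sum_subset (Finset.filter_subset _ _)
      intro i hi hni
      simp only [hS, Finset.mem_filter] at hni
      have : (diag n m i ∩ F).card = 0 := by
        by_contra h
        exact hni ⟨hi, h⟩
      simp [this]
    rw [h1, sum_sub_one hSone, hsumS]
  -- κ_1 = |F| - m
  have hk1 : kappaJ F m 2 1 = F.card - m := by
    unfold kappaJ
    have hmeq : m - 2 + 1 + 1 = m := by omega
    rw [hmeq, sum_sub_one (fun t ht => by
      simp only [Finset.mem_Icc] at ht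
      exact hcol1 t ht.1 ht.2), hsumcol]
    simp
  -- κ_0 ≥ |F| - m
  have hk0 : F.card - m ≤ kappaJ F m 2 0 := by
    unfold kappaJ
    have hmeq : m - 2 + 1 + 0 = m - 1 := by omega
    rw [hmeq]
    simp only [Nat.sub_zero]
    have hsplit : ∑ t ∈ Finset.Icc 1 m, colH F t
        = ∑ t ∈ Finset.Icc 1 (m - 1), colH F t + colH F m := by
      have : m = (m - 1) + 1 := by omega
      rw [this, Finset.sum_Icc_succ_top (by omega), ← this]
    have := hsumcol
    omega
  -- κ(F,2) = |F| - m
  have hset : kappaJ F m 2 '' Set.Iio 2 = {kappaJ F m 2 0, kappaJ F m 2 1} := by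
    ext x
    simp only [Set.mem_image, Set.mem_Iio, Set.mem_insert_iff, Set.mem_singleton_iff]
    constructor
    · rintro ⟨j, hj, rfl⟩
      interval_cases j
      · exact Or.inl rfl
      · exact Or.inr rfl
    · rintro (rfl | rfl)
      exacts [⟨0, by omega, rfl⟩, ⟨1, by omega, rfl⟩]
  have hkappa : kappa F m 2 = F.card - m := by
    rw [kappa, hset, csInf_pair, hk1]
    have := hk0
    omega
  rw [MDSConstructible, hkappa, hdsum]
  constructor
  · intro hMDS i hi
    have hm_le_F : m ≤ F.card := le_trans hmS hScard_le
    have hSeq : S.card = m := by omega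
    have hSicc : Finset.Icc 1 m = S := by
      apply Finset.eq_of_subset_of_card_le hIccS
      rw [hSeq]
      simp
    by_cases hi2 : i ≤ m + n - 1
    · have hiS : i ∉ S := by
        rw [← hSicc]
        simp only [Finset.mem_Icc]
        omega
      simp only [hS, Finset.mem_filter, Finset.mem_Icc, not_and, Decidable.not_not] at hiS
      exact hiS ⟨by omega, hi2⟩
    · exact hbig i (by omega)
  · intro h
    have hSsub : S ⊆ Finset.Icc 1 m := by
      intro i hi
      simp only [hS, Finset.mem_filter, Finset.mem_Icc] at hi
      simp only [Finset.mem_Icc]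
      refine ⟨hi.1.1, ?_⟩
      by_contra hc
      exact hi.2 (h i (by omega))
    have : S = Finset.Icc 1 m := Finset.Subset.antisymm hSsub hIccS
    rw [this]
    simp
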